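/- Let α be irrational with β(α) = 0, and let θ ∈ ℝ be fixed with ε₀-resonances n₁, n₂, … (ordered by increasing modulus). Then there is a constant c > 0 (depending on ε₀) such that ln ‖2θ − n_j α‖_{ℝ/ℤ}^{-1} ≥ c|n_j| for all j, and ln ‖2θ − n_j α‖_{ℝ/ℤ}^{-1} = o(|n_{j+1}|) as j → ∞ (whenever n_{j+1} exists). -/

import Mathlib

/-- Distance to the nearest integer. -/
noncomputable def distZ (x : ℝ) : ℝ := |x - round x|

/-- `k` is an `ε₀`-resonance for `(α, θ)`. -/
def IsResonance (α θ ε₀ : ℝ) (k : ℤ) : Prop :=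
  distZ (2 * θ - (k : ℝ) * α) ≤ Real.exp (-(k.natAbs : ℝ) * ε₀) ∧
    ∀ j : ℤ, |j| ≤ |k| → distZ (2 * θ - (k : ℝ) * α) ≤ distZ (2 * θ - (j : ℝ) * α)

lemma distZ_nonneg (x : ℝ) : 0 ≤ distZ x := abs_nonneg _

lemma distZ_le_int (x : ℝ) (m : ℤ) : distZ x ≤ |x - m| := round_le x m

lemma distZ_neg (x : ℝ) : distZ (-x) = distZ x := by
  apply le_antisymm
  · have h : (-x) - ((-(round x) : ℤ) : ℝ) = -(x - round x) := by push_cast; ring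
    calc distZ (-x) ≤ |(-x) - ((-(round x) : ℤ) : ℝ)| := distZ_le_int _ _
      _ = distZ x := by rw [h, abs_neg]; rfl
  · have h : x - ((-(round (-x)) : ℤ) : ℝ) = -((-x) - round (-x)) := by push_cast; ring
    calc distZ x ≤ |x - ((-(round (-x)) : ℤ) : ℝ)| := distZ_le_int _ _
      _ = distZ (-x) := by rw [h, abs_neg]; rfl

lemma distZ_add_int (x : ℝ) (p : ℤ) : distZ (x + p) = distZ x := by
  apply le_antisymm
  · have h : (x + p) - ((round x + p : ℤ) : ℝ) = x - round x := by push_cast; ring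
    calc distZ (x + p) ≤ |(x + p) - ((round x + p : ℤ) : ℝ)| := distZ_le_int _ _
      _ = distZ x := by rw [h]; rfl
  · have h : x - ((round (x + p) - p : ℤ) : ℝ) = (x + p) - round (x + p) := by push_cast; ring
    calc distZ x ≤ |x - ((round (x + p) - p : ℤ) : ℝ)| := distZ_le_int _ _
      _ = distZ (x + p) := by rw [h]; rfl

lemma distZ_sub_le (x y : ℝ) : distZ (x - y) ≤ distZ x + distZ y := by
  have h : (x - y) - ((round x - round y : ℤ) : ℝ) = (x - round x) - (y - round y) := by
    push_cast; ring
  calc distZ (x - y) ≤ |(x - y) - ((round x - round y : ℤ) : ℝ)| := distZ_le_int _ _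
    _ = |(x - round x) - (y - round y)| := by rw [h]
    _ ≤ |x - round x| + |y - round y| := abs_sub _ _
    _ = distZ x + distZ y := rfl

lemma distZ_int_mul_pos {α : ℝ} (hirr : Irrational α) {m : ℤ} (hm : m ≠ 0) :
    0 < distZ ((m : ℝ) * α) := by
  rw [distZ, abs_pos, sub_ne_zero]
  exact (hirr.intCast_mul hm).ne_int _

lemma distZ_natAbs (α : ℝ) (m : ℤ) : distZ ((m.natAbs : ℝ) * α) = distZ ((m : ℝ) * α) := by
  rcases Int.natAbs_eq m with h | h
  · conv_rhs => rw [h]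
    rw [Int.cast_natCast]
  · conv_rhs => rw [h]
    rw [Int.cast_neg, Int.cast_natCast, neg_mul, distZ_neg]

lemma exists_pos_lb {α : ℝ} (hirr : Irrational α) (K : ℕ) :
    ∃ d > 0, ∀ m : ℤ, m ≠ 0 → m.natAbs ≤ K → d ≤ distZ ((m : ℝ) * α) := by
  induction K with
  | zero =>
    exact ⟨1, one_pos, fun m hm h => absurd (Int.natAbs_eq_zero.mp (Nat.le_zero.mp h)) hm⟩
  | succ K ih =>
    obtain ⟨d, hd, hdle⟩ := ih
    have hpos : 0 < distZ ((((K + 1 : ℕ) : ℤ) : ℝ) * α) :=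
      distZ_int_mul_pos hirr (by exact_mod_cast Nat.succ_ne_zero K)
    refine ⟨min d (distZ ((((K + 1 : ℕ) : ℤ) : ℝ) * α)), lt_min hd hpos, fun m hm hle => ?_⟩
    rcases Nat.lt_succ_iff_lt_or_eq.mp (Nat.lt_succ_of_le hle) with h | h
    · exact le_trans (min_le_left _ _) (hdle m hm (Nat.lt_succ_iff.mp h))
    · have : distZ ((((K + 1 : ℕ) : ℤ) : ℝ) * α) = distZ ((m : ℝ) * α) := by
        rw [Int.cast_natCast, ← h, distZ_natAbs]
      exact le_trans (min_le_right _ _) this.le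

/-- Lemma `following resonance`: lower and upper bounds on the resonance strength. -/
theorem stmt12 (α : ℝ) (hirr : Irrational α)
    (hβ : ∀ δ > (0 : ℝ), ∃ K : ℕ, ∀ k : ℕ, K ≤ k →
      Real.exp (-δ * k) ≤ distZ ((k : ℝ) * α))
    (θ ε₀ : ℝ) (hε₀ : 0 < ε₀) (n : ℕ → ℤ) (hinj : Function.Injective n)
    (hmono : ∀ j : ℕ, (n j).natAbs ≤ (n (j + 1)).natAbs)
    (hres : ∀ j : ℕ, IsResonance α θ ε₀ (n j))
    (hall : ∀ k : ℤ, IsResonance α θ ε₀ k → ∃ j : ℕ, n j = k) :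
    (∃ c > (0 : ℝ), ∀ j : ℕ,
        c * ((n j).natAbs : ℝ) ≤ Real.log (distZ (2 * θ - (n j : ℝ) * α))⁻¹) ∧
      ∀ δ > (0 : ℝ), ∃ J : ℕ, ∀ j ≥ J,
        Real.log (distZ (2 * θ - (n j : ℝ) * α))⁻¹ ≤ δ * ((n (j + 1)).natAbs : ℝ) := by
  -- the sequence |n j| is monotone and grows to infinity
  have mono : Monotone fun j => (n j).natAbs := monotone_nat_of_le_succ hmono
  have step2 : ∀ j : ℕ, (n j).natAbs < (n (j + 2)).natAbs := by
    intro j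
    have h1 := hmono j
    have h2 : (n (j + 1)).natAbs ≤ (n (j + 2)).natAbs := hmono (j + 1)
    have e1 : n j ≠ n (j + 1) := fun e => by simpa using hinj e
    have e2 : n (j + 1) ≠ n (j + 2) := fun e => by simpa using hinj e
    have e3 : n j ≠ n (j + 2) := fun e => by simpa using hinj e
    omega
  have grow : ∀ N : ℕ, ∀ j : ℕ, 2 * N ≤ j → N ≤ (n j).natAbs := by
    intro N
    induction N with
    | zero => intro j _; exact Nat.zero_le _
    | succ N ih =>
      intro j hj
      have hN := ih (2 * N) le_rfl
      have hs := step2 (2 * N)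
      have : N + 1 ≤ (n (2 * N + 2)).natAbs := by omega
      exact le_trans this (mono (by omega))
  -- positivity of all resonance strengths
  have hpos : ∀ j : ℕ, 0 < distZ (2 * θ - (n j : ℝ) * α) := by
    intro j
    rcases (distZ_nonneg (2 * θ - (n j : ℝ) * α)).lt_or_eq with h | h
    · exact h
    exfalso
    have h0 : 2 * θ - (n j : ℝ) * α = round (2 * θ - (n j : ℝ) * α) := by
      have := h.symm
      rwa [distZ, abs_eq_zero, sub_eq_zero] at this
    set p : ℤ := round (2 * θ - (n j : ℝ) * α) with hp
    obtain ⟨K, hK⟩ := hβ (ε₀ / 2) (by positivity)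
    obtain ⟨d, hd, hdle⟩ := exists_pos_lb hirr K
    obtain ⟨N, hN⟩ := exists_nat_gt ((-Real.log d) / ε₀)
    have hNexp : Real.exp (-(ε₀ * N)) < d := by
      rw [← Real.exp_log hd]
      apply Real.exp_lt_exp.mpr
      rw [div_lt_iff₀ hε₀] at hN
      nlinarith
    set i : ℕ := 2 * max N ((n j).natAbs + 1) with hi
    have hni : max N ((n j).natAbs + 1) ≤ (n i).natAbs := grow _ i le_rfl
    have hNi : N ≤ (n i).natAbs := le_trans (le_max_left _ _) hni
    have hji : (n j).natAbs + 1 ≤ (n i).natAbs := le_trans (le_max_right _ _) hni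
    set m : ℤ := n j - n i with hm
    have hmne : m ≠ 0 := by
      intro hmm
      have : n j = n i := by omega
      have := hinj this
      omega
    have hεi : distZ (2 * θ - (n i : ℝ) * α) = distZ ((m : ℝ) * α) := by
      have hx : 2 * θ - (n i : ℝ) * α = (m : ℝ) * α + (p : ℝ) := by
        rw [hm]
        push_cast
        linear_combination h0
      rw [hx, distZ_add_int]
    have hub : distZ (2 * θ - (n i : ℝ) * α) ≤ Real.exp (-((n i).natAbs : ℝ) * ε₀) := (hres i).1
    have hub2 : distZ ((m : ℝ) * α) < d := by
      rw [← hεi]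
      refine lt_of_le_of_lt hub (lt_of_le_of_lt ?_ hNexp)
      apply Real.exp_le_exp.mpr
      have : (N : ℝ) ≤ ((n i).natAbs : ℝ) := by exact_mod_cast hNi
      nlinarith
    rcases le_or_gt m.natAbs K with hcase | hcase
    · exact absurd (hdle m hmne hcase) (not_le.mpr hub2)
    · have hlow := hK m.natAbs hcase.le
      rw [distZ_natAbs] at hlow
      have hchain : Real.exp (-(ε₀ / 2) * m.natAbs) ≤ Real.exp (-((n i).natAbs : ℝ) * ε₀) :=
        le_trans hlow (hεi ▸ hub)
      have hexp := Real.exp_le_exp.mp hchain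
      have habs : (m.natAbs : ℝ) ≤ ((n j).natAbs : ℝ) + ((n i).natAbs : ℝ) := by
        have := Int.natAbs_sub_le (n j) (n i)
        exact_mod_cast this
      have hlt : ((n j).natAbs : ℝ) + 1 ≤ ((n i).natAbs : ℝ) := by exact_mod_cast hji
      nlinarith
  constructor
  · -- part 1: lower bound with c = ε₀
    refine ⟨ε₀, hε₀, fun j => ?_⟩
    have h1 := (hres j).1
    have h2 : Real.log (distZ (2 * θ - (n j : ℝ) * α)) ≤ -((n j).natAbs : ℝ) * ε₀ := by
      rw [Real.log_le_iff_le_exp (hpos j)]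
      exact h1
    rw [Real.log_inv]
    linarith
  · -- part 2
    intro δ hδ
    obtain ⟨K, hK⟩ := hβ (δ / 4) (by positivity)
    obtain ⟨d, hd, hdle⟩ := exists_pos_lb hirr K
    obtain ⟨N₁, hN₁⟩ := exists_nat_gt ((-Real.log (d / 2)) / ε₀)
    have hN₁exp : Real.exp (-(ε₀ * N₁)) < d / 2 := by
      rw [← Real.exp_log (by positivity : (0:ℝ) < d / 2)]
      apply Real.exp_lt_exp.mpr
      rw [div_lt_iff₀ hε₀] at hN₁
      nlinarith
    obtain ⟨N₂, hN₂⟩ := exists_nat_gt (2 * Real.log 2 / δ)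
    have hN₂log : Real.log 2 ≤ δ / 2 * N₂ := by
      rw [div_lt_iff₀ hδ] at hN₂
      nlinarith
    refine ⟨2 * max N₁ N₂, fun j hj => ?_⟩
    have hnj : max N₁ N₂ ≤ (n j).natAbs := grow _ j hj
    have hnj1 : max N₁ N₂ ≤ (n (j + 1)).natAbs := le_trans hnj (hmono j)
    set m : ℤ := n (j + 1) - n j with hm
    have hmne : m ≠ 0 := by
      intro hmm
      have : n (j + 1) = n j := by omega
      have := hinj this
      omega
    have htri : distZ ((m : ℝ) * α) ≤
        distZ (2 * θ - (n j : ℝ) * α) + distZ (2 * θ - (n (j + 1) : ℝ) * α) := by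
      have hx : (m : ℝ) * α = (2 * θ - (n j : ℝ) * α) - (2 * θ - (n (j + 1) : ℝ) * α) := by
        rw [hm]; push_cast; ring
      rw [hx]
      exact distZ_sub_le _ _
    have hle : distZ (2 * θ - (n (j + 1) : ℝ) * α) ≤ distZ (2 * θ - (n j : ℝ) * α) := by
      apply (hres (j + 1)).2 (n j)
      rw [Int.abs_eq_natAbs, Int.abs_eq_natAbs]
      exact_mod_cast hmono j
    have h2e : distZ ((m : ℝ) * α) ≤ 2 * distZ (2 * θ - (n j : ℝ) * α) := by linarith
    rcases le_or_gt m.natAbs K with hcase | hcase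
    · exfalso
      have hlb := hdle m hmne hcase
      have hub := (hres j).1
      have hNj : (N₁ : ℝ) ≤ ((n j).natAbs : ℝ) := by
        exact_mod_cast le_trans (le_max_left _ _) hnj
      have : Real.exp (-((n j).natAbs : ℝ) * ε₀) ≤ Real.exp (-(ε₀ * N₁)) := by
        apply Real.exp_le_exp.mpr
        nlinarith
      nlinarith
    · have hlow := hK m.natAbs hcase.le
      rw [distZ_natAbs] at hlow
      set A : ℝ := ((n (j + 1)).natAbs : ℝ) with hA
      have hmA : (m.natAbs : ℝ) ≤ 2 * A := by
        have h1 := Int.natAbs_sub_le (n (j + 1)) (n j)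
        have h2 := hmono j
        have : (m.natAbs : ℝ) ≤ ((n (j + 1)).natAbs : ℝ) + ((n j).natAbs : ℝ) := by
          exact_mod_cast h1
        have h2' : ((n j).natAbs : ℝ) ≤ A := by rw [hA]; exact_mod_cast h2
        linarith
    -- dist ≥ exp(-(δ/4) m) ≥ exp(-(δ/2) A); so ε_j ≥ (1/2) exp(-(δ/2)A) ≥ exp(-δA)
      have hεj : Real.exp (-(δ / 2) * A) ≤ 2 * distZ (2 * θ - (n j : ℝ) * α) := by
        refine le_trans ?_ (le_trans hlow h2e)
        apply Real.exp_le_exp.mpr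
        nlinarith
      have hhalf : Real.exp (-(δ / 2) * A) ≤ 1 / 2 := by
        rw [show (1 / 2 : ℝ) = Real.exp (-Real.log 2) by
          rw [Real.exp_neg, Real.exp_log two_pos]; norm_num]
        apply Real.exp_le_exp.mpr
        have hA2 : (N₂ : ℝ) ≤ A := by
          rw [hA]; exact_mod_cast le_trans (le_max_right _ _) hnj1
        nlinarith
      have hfin : Real.exp (-(δ * A)) ≤ distZ (2 * θ - (n j : ℝ) * α) := by
        have : Real.exp (-(δ * A)) = Real.exp (-(δ / 2) * A) * Real.exp (-(δ / 2) * A) := by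
          rw [← Real.exp_add]; ring_nf
        nlinarith [Real.exp_pos (-(δ / 2) * A), hεj]
      rw [Real.log_inv]
      have := (Real.le_log_iff_exp_le (hpos j)).mpr hfin
      linarith
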